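/- Let H ∈ ℝ^{N×N} be symmetric positive definite, let D̃ ∈ ℝ^{N×N}, and let e_ℓ, e_r, d_ℓ, d_r ∈ ℝ^N. Define the summation-by-parts operator D₂ = H^{-1}(−D̃ᵀ H D̃ + e_r d_rᵀ − e_ℓ d_ℓᵀ). Define the two-dimensional operators D_Δ = D₂ ⊗ I + I ⊗ D₂ and H_Ω = H ⊗ H (I the N×N identity, ⊗ the Kronecker product), the boundary restriction matrices e_W = e_ℓ ⊗ I, e_E = e_r ⊗ I, e_S = I ⊗ e_ℓ, e_N = I ⊗ e_r, and the boundary normal-derivative matrices d_W = −d_ℓ ⊗ I, d_E = d_r ⊗ I, d_S = −I ⊗ d_ℓ, d_N = I ⊗ d_r. Then for all f, g ∈ ℂ^{N²}, f* H_Ω (D_Δ g) = −(D̃⊗I f)* H_Ω (D̃⊗I g) − (I⊗D̃ f)* H_Ω (I⊗D̃ g) + Σ_{α ∈ {W,S,E,N}} (e_αᵀ f)* H (d_αᵀ g). -/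

import Mathlib

open Matrix Kronecker

/-- Complexification of a real matrix. -/
def cm {m n : Type*} (A : Matrix m n ℝ) : Matrix m n ℂ := A.map (fun r => (r : ℂ))

/-- The Kronecker product `v ⊗ I` of a column vector `v ∈ ℝ^N` with the `N×N` identity,
an `N² × N` matrix. -/
def kronL {N : ℕ} (v : Fin N → ℝ) : Matrix (Fin N × Fin N) (Fin N) ℝ :=
  fun p k => v p.1 * (if p.2 = k then 1 else 0)

/-- The Kronecker product `I ⊗ v` of the `N×N` identity with a column vector `v ∈ ℝ^N`,
an `N² × N` matrix. -/
def kronR {N : ℕ} (v : Fin N → ℝ) : Matrix (Fin N × Fin N) (Fin N) ℝ :=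
  fun p k => (if p.1 = k then 1 else 0) * v p.2

lemma cm_mul {m n p : Type*} [Fintype n] (A : Matrix m n ℝ) (B : Matrix n p ℝ) :
    cm (A * B) = cm A * cm B := by
  ext i j; simp [cm, Matrix.mul_apply]

lemma cm_add {m n : Type*} (A B : Matrix m n ℝ) : cm (A + B) = cm A + cm B := by
  ext i j; simp [cm]

lemma cm_sub {m n : Type*} (A B : Matrix m n ℝ) : cm (A - B) = cm A - cm B := by
  ext i j; simp [cm]

lemma cm_neg {m n : Type*} (A : Matrix m n ℝ) : cm (-A) = -cm A := by
  ext i j; simp [cm]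

lemma cm_conjTranspose {m n : Type*} (A : Matrix m n ℝ) : (cm A)ᴴ = cm Aᵀ := by
  ext i j; simp [cm, conjTranspose_apply]

/-- `f* (cm A) (cm M) (cm B) g = f* cm(Aᵀ M B) g`. -/
lemma quad {m n : Type*} [Fintype m] [Fintype n]
    (A B : Matrix m n ℝ) (M : Matrix m m ℝ) (f g : n → ℂ) :
    star (cm A *ᵥ f) ⬝ᵥ cm M *ᵥ (cm B *ᵥ g) =
      star f ⬝ᵥ cm (Aᵀ * M * B) *ᵥ g := by
  rw [star_mulVec, cm_conjTranspose, ← dotProduct_mulVec, mulVec_mulVec, mulVec_mulVec,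
    ← cm_mul, ← cm_mul, Matrix.mul_assoc]

lemma quadT {m n : Type*} [Fintype m] [Fintype n]
    (A B : Matrix m n ℝ) (M : Matrix n n ℝ) (f g : m → ℂ) :
    star ((cm A)ᵀ *ᵥ f) ⬝ᵥ cm M *ᵥ ((cm B)ᵀ *ᵥ g) =
      star f ⬝ᵥ cm (A * M * Bᵀ) *ᵥ g := by
  have h1 : (cm A)ᵀ = cm Aᵀ := rfl
  have h2 : (cm B)ᵀ = cm Bᵀ := rfl
  rw [h1, h2, quad, Matrix.transpose_transpose]

lemma kronL_mul {N : ℕ} (v w : Fin N → ℝ) (H : Matrix (Fin N) (Fin N) ℝ) :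
    kronL v * H * (kronL w)ᵀ = (vecMulVec v w) ⊗ₖ H := by
  ext p q
  simp [Matrix.mul_apply, kronL, vecMulVec_apply, transpose_apply, ite_mul, mul_ite,
    Finset.sum_mul]
  ring

lemma kronR_mul {N : ℕ} (v w : Fin N → ℝ) (H : Matrix (Fin N) (Fin N) ℝ) :
    kronR v * H * (kronR w)ᵀ = H ⊗ₖ (vecMulVec v w) := by
  ext p q
  simp [Matrix.mul_apply, kronR, vecMulVec_apply, transpose_apply, ite_mul, mul_ite,
    Finset.sum_mul]
  ring

/-- The discrete analogue of Green's first identity for the two-dimensional SBP operator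
`D_Δ = D₂ ⊗ I + I ⊗ D₂` built from `D₂ = H⁻¹(−D̃ᵀ H D̃ + e_r d_rᵀ − e_ℓ d_ℓᵀ)`:
`f* H_Ω D_Δ g = −(D̃⊗I f)* H_Ω (D̃⊗I g) − (I⊗D̃ f)* H_Ω (I⊗D̃ g)
  + Σ_{α∈{W,S,E,N}} (e_αᵀ f)* H (d_αᵀ g)`,
where `e_W = e_ℓ ⊗ I`, `e_E = e_r ⊗ I`, `e_S = I ⊗ e_ℓ`, `e_N = I ⊗ e_r`,
`d_W = −d_ℓ ⊗ I`, `d_E = d_r ⊗ I`, `d_S = −I ⊗ d_ℓ`, `d_N = I ⊗ d_r`. -/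
theorem stmt5 {N : ℕ}
    (H : Matrix (Fin N) (Fin N) ℝ) (hH : H.PosDef) (hHsymm : H.IsSymm)
    (Dt : Matrix (Fin N) (Fin N) ℝ)
    (el er dl dr : Fin N → ℝ)
    (D2 : Matrix (Fin N) (Fin N) ℝ)
    (hD2 : D2 = H⁻¹ * (-(Dtᵀ * H * Dt) + vecMulVec er dr - vecMulVec el dl))
    (DΔ HΩ : Matrix (Fin N × Fin N) (Fin N × Fin N) ℝ)
    (hDΔ : DΔ = D2 ⊗ₖ (1 : Matrix (Fin N) (Fin N) ℝ) + (1 : Matrix (Fin N) (Fin N) ℝ) ⊗ₖ D2)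
    (hHΩ : HΩ = H ⊗ₖ H)
    (eW eE eS eN dW dE dS dN : Matrix (Fin N × Fin N) (Fin N) ℝ)
    (heW : eW = kronL el) (heE : eE = kronL er) (heS : eS = kronR el) (heN : eN = kronR er)
    (hdW : dW = kronL (-dl)) (hdE : dE = kronL dr) (hdS : dS = kronR (-dl)) (hdN : dN = kronR dr) :
    ∀ f g : Fin N × Fin N → ℂ,
      star f ⬝ᵥ (cm HΩ) *ᵥ ((cm DΔ) *ᵥ g) =
        -(star ((cm (Dt ⊗ₖ (1 : Matrix (Fin N) (Fin N) ℝ))) *ᵥ f) ⬝ᵥ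
            (cm HΩ) *ᵥ ((cm (Dt ⊗ₖ (1 : Matrix (Fin N) (Fin N) ℝ))) *ᵥ g))
        - (star ((cm ((1 : Matrix (Fin N) (Fin N) ℝ) ⊗ₖ Dt)) *ᵥ f) ⬝ᵥ
            (cm HΩ) *ᵥ ((cm ((1 : Matrix (Fin N) (Fin N) ℝ) ⊗ₖ Dt)) *ᵥ g))
        + (star ((cm eW)ᵀ *ᵥ f) ⬝ᵥ (cm H) *ᵥ ((cm dW)ᵀ *ᵥ g))
        + (star ((cm eS)ᵀ *ᵥ f) ⬝ᵥ (cm H) *ᵥ ((cm dS)ᵀ *ᵥ g))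
        + (star ((cm eE)ᵀ *ᵥ f) ⬝ᵥ (cm H) *ᵥ ((cm dE)ᵀ *ᵥ g))
        + (star ((cm eN)ᵀ *ᵥ f) ⬝ᵥ (cm H) *ᵥ ((cm dN)ᵀ *ᵥ g)) := by
  intro f g
  -- the key real matrix identity
  have hHD2 : H * D2 = -(Dtᵀ * H * Dt) + vecMulVec er dr - vecMulVec el dl := by
    rw [hD2, Matrix.mul_nonsing_inv_cancel_left _ _ (isUnit_iff_ne_zero.mpr hH.det_pos.ne')]
  have key : HΩ * DΔ =
      -((Dt ⊗ₖ (1 : Matrix (Fin N) (Fin N) ℝ))ᵀ * HΩ * (Dt ⊗ₖ (1 : Matrix (Fin N) (Fin N) ℝ)))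
      - (((1 : Matrix (Fin N) (Fin N) ℝ) ⊗ₖ Dt)ᵀ * HΩ * ((1 : Matrix (Fin N) (Fin N) ℝ) ⊗ₖ Dt))
      + eW * H * dWᵀ + eS * H * dSᵀ + eE * H * dEᵀ + eN * H * dNᵀ := by
    have hWd : kronL (-dl) = -(kronL dl) := by
      ext p k; simp only [kronL, Pi.neg_apply, Matrix.neg_apply, mul_ite, mul_one, mul_zero]
      split <;> simp
    have hSd : kronR (-dl) = -(kronR dl) := by
      ext p k; simp only [kronR, Pi.neg_apply, Matrix.neg_apply, ite_mul, one_mul, zero_mul]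
      split <;> simp
    rw [hDΔ, hHΩ, heW, heE, heS, heN, hdW, hdE, hdS, hdN, hWd, hSd]
    rw [Matrix.mul_add, ← Matrix.mul_kronecker_mul, ← Matrix.mul_kronecker_mul,
      ← Matrix.kroneckerMap_transpose, ← Matrix.kroneckerMap_transpose]
    rw [← Matrix.mul_kronecker_mul, ← Matrix.mul_kronecker_mul,
      ← Matrix.mul_kronecker_mul, ← Matrix.mul_kronecker_mul]
    rw [hHD2]
    simp only [Matrix.transpose_neg, Matrix.mul_neg, Matrix.neg_mul, Matrix.mul_one,
      Matrix.one_mul, Matrix.transpose_one, kronL_mul, kronR_mul]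
    ext p q
    simp [kroneckerMap_apply, vecMulVec_apply, Matrix.sub_apply, Matrix.add_apply,
      Matrix.neg_apply]
    ring
  -- now convert everything to the form `star f ⬝ᵥ cm M *ᵥ g`
  rw [mulVec_mulVec, ← cm_mul, key]
  rw [quad, quad, quadT, quadT, quadT, quadT]
  simp only [cm_add, cm_sub, cm_neg, add_mulVec, sub_mulVec,
    neg_mulVec, dotProduct_add, dotProduct_sub, dotProduct_neg]
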